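/- Let a > 0. For the planar system Ṁ₁ = (1/a)M₂(M₁ - 1/2), Ṁ₂ = -(1/a)(M₁ - 1/2)(M₁ + 1): (i) the point (1/2, 0) is an equilibrium and lies on the circle (M₁+1)² + M₂² = 9/4; (ii) the circle (M₁+1)² + M₂² = 9/4 is invariant under the flow; (iii) every solution M : ℝ → ℝ² with initial value on this circle and M(0) ≠ (1/2, 0) is not periodic, i.e. there is no T > 0 with M(t+T) = M(t) for all t. -/

import Mathlib

open Real

private lemma circle_invariant (a : ℝ) (M₁ M₂ : ℝ → ℝ)
    (h1 : ∀ t, HasDerivAt M₁ ((1 / a) * M₂ t * (M₁ t - 1 / 2)) t)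
    (h2 : ∀ t, HasDerivAt M₂ (-(1 / a) * (M₁ t - 1 / 2) * (M₁ t + 1)) t)
    (h0 : (M₁ 0 + 1) ^ 2 + M₂ 0 ^ 2 = 9 / 4) :
    ∀ t : ℝ, (M₁ t + 1) ^ 2 + M₂ t ^ 2 = 9 / 4 := by
  intro t
  set F : ℝ → ℝ := fun t => (M₁ t + 1) ^ 2 + M₂ t ^ 2 with hF
  have hF' : ∀ t, HasDerivAt F 0 t := by
    intro t
    have h := (((h1 t).add_const 1).pow 2).add ((h2 t).pow 2)
    refine h.congr_deriv ?_
    push_cast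
    ring
  have hconst := is_const_of_deriv_eq_zero
    (fun s => (hF' s).differentiableAt) (fun s => (hF' s).deriv) t 0
  simpa [hF, h0] using hconst

set_option maxHeartbeats 1000000 in
private lemma not_periodic (a : ℝ) (ha : 0 < a) (M₁ M₂ : ℝ → ℝ)
    (h1 : ∀ t, HasDerivAt M₁ ((1 / a) * M₂ t * (M₁ t - 1 / 2)) t)
    (h2 : ∀ t, HasDerivAt M₂ (-(1 / a) * (M₁ t - 1 / 2) * (M₁ t + 1)) t)
    (h0 : (M₁ 0 + 1) ^ 2 + M₂ 0 ^ 2 = 9 / 4)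
    (hne : (M₁ 0, M₂ 0) ≠ (1 / 2, 0)) :
    ¬ ∃ T : ℝ, 0 < T ∧ ∀ t : ℝ, (M₁ (t + T), M₂ (t + T)) = (M₁ t, M₂ t) := by
  rintro ⟨T, hT, hper⟩
  -- initial angle
  set z : ℂ := ⟨M₁ 0 + 1, M₂ 0⟩ with hz
  have habs : ‖z‖ = 3 / 2 := by
    rw [Complex.norm_def, Complex.normSq_mk]
    rw [show (M₁ 0 + 1) * (M₁ 0 + 1) + M₂ 0 * M₂ 0 = 9 / 4 by nlinarith [h0]]
    rw [show (9 : ℝ) / 4 = (3 / 2) ^ 2 by norm_num]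
    exact Real.sqrt_sq (by norm_num)
  have hzne : z ≠ 0 := by
    intro h
    rw [h] at habs
    simp at habs
    norm_num at habs
  set θ₀ : ℝ := z.arg with hθ₀
  have hc0 : M₁ 0 + 1 = (3 / 2) * Real.cos θ₀ := by
    have := Complex.cos_arg hzne
    rw [habs] at this
    rw [hθ₀, this]
    show M₁ 0 + 1 = 3 / 2 * (z.re / (3 / 2))
    rw [hz]
    show M₁ 0 + 1 = 3 / 2 * ((M₁ 0 + 1) / (3 / 2))
    field_simp
  have hs0 : M₂ 0 = (3 / 2) * Real.sin θ₀ := by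
    have := Complex.sin_arg z
    rw [habs] at this
    rw [hθ₀, this]
    show M₂ 0 = 3 / 2 * (z.im / (3 / 2))
    rw [hz]
    show M₂ 0 = 3 / 2 * (M₂ 0 / (3 / 2))
    field_simp
  -- the angle function
  have hM₁d : Differentiable ℝ M₁ := fun t => (h1 t).differentiableAt
  have hM₁c : Continuous M₁ := hM₁d.continuous
  have hIc : Continuous (fun s => (1 / a) * (1 / 2 - M₁ s)) :=
    continuous_const.mul (continuous_const.sub hM₁c)
  set θ : ℝ → ℝ := fun t => θ₀ + ∫ s in (0 : ℝ)..t, (1 / a) * (1 / 2 - M₁ s) with hθdef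
  have hθ' : ∀ t, HasDerivAt θ ((1 / a) * (1 / 2 - M₁ t)) t := fun t =>
    ((hIc.integral_hasStrictDerivAt 0 t).hasDerivAt).const_add θ₀
  have hθ0 : θ 0 = θ₀ := by simp [hθdef]
  have hθdiff : Differentiable ℝ θ := fun t => (hθ' t).differentiableAt
  have hθcont : Continuous θ := hθdiff.continuous
  -- M is the circle parametrized by θ
  set E₁ : ℝ → ℝ := fun t => M₁ t + 1 - (3 / 2) * Real.cos (θ t) with hE₁def
  set E₂ : ℝ → ℝ := fun t => M₂ t - (3 / 2) * Real.sin (θ t) with hE₂def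
  have hE₁' : ∀ t, HasDerivAt E₁ ((1 / a) * (M₁ t - 1 / 2) * E₂ t) t := by
    intro t
    have hcos : HasDerivAt (fun t => Real.cos (θ t))
        (-Real.sin (θ t) * ((1 / a) * (1 / 2 - M₁ t))) t :=
      (Real.hasDerivAt_cos (θ t)).comp t (hθ' t)
    have h := ((h1 t).add_const 1).sub (hcos.const_mul (3 / 2))
    refine h.congr_deriv ?_
    simp [hE₂def]
    ring
  have hE₂' : ∀ t, HasDerivAt E₂ (-(1 / a) * (M₁ t - 1 / 2) * E₁ t) t := by
    intro t
    have hsin : HasDerivAt (fun t => Real.sin (θ t))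
        (Real.cos (θ t) * ((1 / a) * (1 / 2 - M₁ t))) t :=
      (Real.hasDerivAt_sin (θ t)).comp t (hθ' t)
    have h := (h2 t).sub (hsin.const_mul (3 / 2))
    refine h.congr_deriv ?_
    simp [hE₁def]
    ring
  have hG : ∀ t, E₁ t = 0 ∧ E₂ t = 0 := by
    have hG' : ∀ t, HasDerivAt (fun t => E₁ t ^ 2 + E₂ t ^ 2) 0 t := by
      intro t
      have h := ((hE₁' t).pow 2).add ((hE₂' t).pow 2)
      refine h.congr_deriv ?_
      push_cast
      ring
    have hG0 : E₁ 0 ^ 2 + E₂ 0 ^ 2 = 0 := by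
      simp only [hE₁def, hE₂def, hθ0]
      rw [← hc0, ← hs0]
      ring
    intro t
    have hconst := is_const_of_deriv_eq_zero
      (fun s => (hG' s).differentiableAt) (fun s => (hG' s).deriv) t 0
    rw [hG0] at hconst
    constructor <;> nlinarith [sq_nonneg (E₁ t), sq_nonneg (E₂ t), hconst]
  have hcosθ : ∀ t, M₁ t + 1 = (3 / 2) * Real.cos (θ t) := by
    intro t
    have := (hG t).1
    simp only [hE₁def] at this
    linarith
  have hsinθ : ∀ t, M₂ t = (3 / 2) * Real.sin (θ t) := by
    intro t
    have := (hG t).2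
    simp only [hE₂def] at this
    linarith
  -- the angular equation
  have hθd : ∀ t, HasDerivAt θ ((3 / (2 * a)) * (1 - Real.cos (θ t))) t := by
    intro t
    have h := hθ' t
    have : (1 / a) * (1 / 2 - M₁ t) = (3 / (2 * a)) * (1 - Real.cos (θ t)) := by
      have := hcosθ t
      field_simp
      nlinarith [this]
    rwa [this] at h
  have hmono : Monotone θ := by
    apply monotone_of_deriv_nonneg (fun t => (hθd t).differentiableAt)
    intro t
    rw [(hθd t).deriv]
    have h1' : (0:ℝ) ≤ 3 / (2 * a) := by positivity
    have h2' : Real.cos (θ t) ≤ 1 := Real.cos_le_one _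
    nlinarith
  have hθ0ne : Real.cos θ₀ ≠ 1 := by
    intro h
    apply hne
    have h1' : M₁ 0 = 1 / 2 := by
      have := hc0; rw [h] at this; linarith
    have hsq : Real.sin θ₀ ^ 2 = 0 := by
      have := Real.sin_sq_add_cos_sq θ₀
      nlinarith
    have h2' : M₂ 0 = 0 := by
      rw [hs0, pow_eq_zero_iff (n := 2) (by norm_num) |>.mp hsq]
      ring
    rw [h1', h2']
  -- the barrier
  set B : ℝ := 2 * π * ⌈θ₀ / (2 * π)⌉ with hBdef
  have hπ : (0:ℝ) < 2 * π := by positivity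
  have hcosB : Real.cos B = 1 := by
    rw [hBdef, show 2 * π * (⌈θ₀ / (2 * π)⌉ : ℝ) = (⌈θ₀ / (2 * π)⌉ : ℝ) * (2 * π) by ring]
    exact Real.cos_int_mul_two_pi _
  have hsinB : Real.sin B = 0 := by
    rw [hBdef, show 2 * π * (⌈θ₀ / (2 * π)⌉ : ℝ) = ((2 * ⌈θ₀ / (2 * π)⌉ : ℤ) : ℝ) * π by
      push_cast; ring]
    exact Real.sin_int_mul_pi _
  have hθ₀leB : θ₀ ≤ B := by
    have := Int.le_ceil (θ₀ / (2 * π))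
    rw [hBdef]
    calc θ₀ = 2 * π * (θ₀ / (2 * π)) := by field_simp
    _ ≤ 2 * π * ⌈θ₀ / (2 * π)⌉ := by nlinarith
  have hθ₀ltB : θ₀ < B := by
    rcases lt_or_eq_of_le hθ₀leB with h | h
    · exact h
    · exact absurd (h ▸ hcosB) hθ0ne
  have hBlt : B < θ₀ + 2 * π := by
    have := Int.ceil_lt_add_one (θ₀ / (2 * π))
    rw [hBdef]
    calc 2 * π * (⌈θ₀ / (2 * π)⌉ : ℝ) < 2 * π * (θ₀ / (2 * π) + 1) := by nlinarith
    _ = θ₀ + 2 * π := by field_simp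
  -- 1 - cos x ≤ (x - B)^2 / 2
  have hcosbd : ∀ x : ℝ, 1 - Real.cos x ≤ (B - x) ^ 2 / 2 := by
    intro x
    have h := Real.one_sub_sq_div_two_le_cos (x := x - B)
    have : Real.cos (x - B) = Real.cos x := by
      rw [Real.cos_sub, hcosB, hsinB]
      ring
    rw [this] at h
    nlinarith
  -- barrier lemma: θ t < B for all t ≥ 0
  have hbarrier : ∀ t : ℝ, 0 ≤ t → θ t < B := by
    by_contra hcon
    push_neg at hcon
    obtain ⟨t₁, ht₁0, ht₁B⟩ := hcon
    set S : Set ℝ := Set.Icc 0 t₁ ∩ θ ⁻¹' Set.Ici B with hSdef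
    have hSclosed : IsClosed S := isClosed_Icc.inter (isClosed_Ici.preimage hθcont)
    have hSne : S.Nonempty := ⟨t₁, ⟨ht₁0, le_refl _⟩, ht₁B⟩
    have hSbdd : BddBelow S := ⟨0, fun x hx => hx.1.1⟩
    set s := sInf S with hsdef
    have hsS : s ∈ S := hSclosed.csInf_mem hSne hSbdd
    have hs0 : 0 ≤ s := hsS.1.1
    have hst₁ : s ≤ t₁ := hsS.1.2
    have hθsB : B ≤ θ s := hsS.2
    have hspos : 0 < s := by
      rcases lt_or_eq_of_le hs0 with h | h
      · exact h
      · exfalso; rw [← h, hθ0] at hθsB; linarith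
    have hlt : ∀ t ∈ Set.Ico 0 s, θ t < B := by
      intro t ht
      by_contra hc
      push_neg at hc
      have : t ∈ S := ⟨⟨ht.1, le_trans (le_of_lt ht.2) hst₁⟩, hc⟩
      exact absurd (csInf_le hSbdd this) (not_le.mpr ht.2)
    have hIoo : Set.Ioo 0 s ∈ nhdsWithin s (Set.Iio s) :=
      Ioo_mem_nhdsLT_of_mem ⟨hspos, le_refl s⟩
    have htends : Filter.Tendsto θ (nhdsWithin s (Set.Iio s)) (nhds (θ s)) :=
      (hθcont.continuousAt).continuousWithinAt.tendsto
    have hθsB' : θ s ≤ B := by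
      refine le_of_tendsto htends ?_
      filter_upwards [hIoo] with t ht
      exact le_of_lt (hlt t ⟨le_of_lt ht.1, ht.2⟩)
    have hθseq : θ s = B := le_antisymm hθsB' hθsB
    -- comparison
    set K : ℝ := 3 / (4 * a) with hKdef
    have hKpos : 0 < K := by positivity
    set f : ℝ → ℝ := fun t => (B - θ t)⁻¹ - K * t with hfdef
    have hfderiv : ∀ t ∈ Set.Ico 0 s, HasDerivAt f
        ((3 / (2 * a)) * (1 - Real.cos (θ t)) / (B - θ t) ^ 2 - K) t := by
      intro t ht
      have hpos : B - θ t ≠ 0 := ne_of_gt (by linarith [hlt t ht])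
      have hinner : HasDerivAt (fun t => B - θ t)
          (-((3 / (2 * a)) * (1 - Real.cos (θ t)))) t := by
        exact ((hasDerivAt_const t B).sub (hθd t)).congr_deriv (by simp)
      have hinv := hinner.inv hpos
      have h := hinv.sub ((hasDerivAt_id t).const_mul K)
      refine h.congr_deriv ?_
      field_simp
    have hanti : AntitoneOn f (Set.Ico 0 s) := by
      apply antitoneOn_of_deriv_nonpos (convex_Ico 0 s)
      · exact fun t ht => (hfderiv t ht).continuousAt.continuousWithinAt
      · rw [interior_Ico]
        exact fun t ht =>
          ((hfderiv t (Set.Ioo_subset_Ico_self ht)).differentiableAt).differentiableWithinAt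
      · rw [interior_Ico]
        intro t ht
        have ht' := Set.Ioo_subset_Ico_self ht
        rw [(hfderiv t ht').deriv]
        have hbpos : 0 < B - θ t := by linarith [hlt t ht']
        have hbd := hcosbd (θ t)
        have hccle : Real.cos (θ t) ≤ 1 := Real.cos_le_one _
        rw [sub_nonpos, div_le_iff₀ (by positivity)]
        have : (3 / (2 * a)) * (1 - Real.cos (θ t)) ≤ (3 / (2 * a)) * ((B - θ t) ^ 2 / 2) := by
          have : (0:ℝ) < 3 / (2 * a) := by positivity
          nlinarith
        calc (3 / (2 * a)) * (1 - Real.cos (θ t)) ≤ (3 / (2 * a)) * ((B - θ t) ^ 2 / 2) := this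
        _ = K * (B - θ t) ^ 2 := by rw [hKdef]; ring
    set C : ℝ := (B - θ₀)⁻¹ + K * s with hCdef
    have hCpos : 0 < C := by
      have h' : 0 < (B - θ₀)⁻¹ := inv_pos.mpr (by linarith)
      rw [hCdef]
      linarith [mul_nonneg (le_of_lt hKpos) hs0]
    have hbound : ∀ t ∈ Set.Ico 0 s, θ t ≤ B - C⁻¹ := by
      intro t ht
      have h0mem : (0 : ℝ) ∈ Set.Ico 0 s := ⟨le_refl _, hspos⟩
      have := hanti h0mem ht ht.1
      simp only [hfdef, hθ0, mul_zero, sub_zero] at this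
      have hbpos : 0 < B - θ t := by linarith [hlt t ht]
      have hKt : K * t ≤ K * s := by nlinarith [ht.2, hKpos]
      have hinvle : (B - θ t)⁻¹ ≤ C := by rw [hCdef]; linarith
      have h1c : C⁻¹ ≤ B - θ t := by
        rw [inv_le_iff_one_le_mul₀' hCpos]
        rw [inv_le_iff_one_le_mul₀' hbpos] at hinvle
        linarith [mul_comm C (B - θ t), hinvle]
      linarith
    have : θ s ≤ B - C⁻¹ := by
      refine le_of_tendsto htends ?_
      filter_upwards [hIoo] with t ht
      exact hbound t ⟨le_of_lt ht.1, ht.2⟩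
    rw [hθseq] at this
    have : C⁻¹ ≤ 0 := by linarith
    exact absurd this (not_le.mpr (inv_pos.mpr hCpos))
  -- conclude
  have hθT : θ T = θ₀ := by
    have hcoseq : Real.cos (θ T) = Real.cos θ₀ := by
      have h := (Prod.mk.injEq _ _ _ _).mp (hper 0)
      rw [zero_add] at h
      have := hcosθ T
      rw [h.1] at this
      rw [hc0] at this
      linarith
    have hsineq : Real.sin (θ T) = Real.sin θ₀ := by
      have h := (Prod.mk.injEq _ _ _ _).mp (hper 0)
      rw [zero_add] at h
      have := hsinθ T
      rw [h.2] at this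
      rw [hs0] at this
      linarith
    have hangle : ((θ T : Real.Angle)) = (θ₀ : Real.Angle) :=
      Real.Angle.cos_sin_inj hcoseq hsineq
    obtain ⟨k, hk⟩ := Real.Angle.angle_eq_iff_two_pi_dvd_sub.mp hangle
    have hge : θ₀ ≤ θ T := by
      rw [← hθ0]; exact hmono (le_of_lt hT)
    have hub : θ T < B := hbarrier T (le_of_lt hT)
    have hk0 : k = 0 := by
      have hπpos : (0:ℝ) < π := Real.pi_pos
      have h1' : (0:ℝ) ≤ 2 * π * k := by linarith
      have h2' : 2 * π * k < 2 * π := by linarith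
      have hkge : (0:ℝ) ≤ (k:ℝ) := by nlinarith
      have hklt : (k:ℝ) < 1 := by nlinarith
      have h3' : (0:ℤ) ≤ k := by exact_mod_cast hkge
      have h4' : k < (1:ℤ) := by exact_mod_cast hklt
      omega
    rw [hk0] at hk
    push_cast at hk
    linarith
  -- θ is constant on [0, T], so its derivative vanishes at T/2
  have hconst : ∀ t ∈ Set.Icc 0 T, θ t = θ₀ := by
    intro t ht
    have h1' : θ₀ ≤ θ t := by rw [← hθ0]; exact hmono ht.1
    have h2' : θ t ≤ θ₀ := by rw [← hθT]; exact hmono ht.2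
    linarith
  have hmem : Set.Ioo 0 T ∈ nhds (T / 2) :=
    (isOpen_Ioo).mem_nhds ⟨by linarith, by linarith⟩
  have heq : θ =ᶠ[nhds (T / 2)] fun _ => θ₀ := by
    filter_upwards [hmem] with t ht
    exact hconst t ⟨le_of_lt ht.1, le_of_lt ht.2⟩
  have hd2 : HasDerivAt (fun _ : ℝ => θ₀) ((3 / (2 * a)) * (1 - Real.cos (θ (T / 2)))) (T / 2) :=
    (Filter.EventuallyEq.hasDerivAt_iff heq).mp (hθd (T / 2))
  have hzero : (3 / (2 * a)) * (1 - Real.cos (θ (T / 2))) = 0 :=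
    hd2.unique (hasDerivAt_const _ _)
  have : Real.cos (θ (T / 2)) = 1 := by
    have h3a : (0:ℝ) < 3 / (2 * a) := by positivity
    rcases mul_eq_zero.mp hzero with h | h
    · linarith
    · linarith
  rw [hconst (T / 2) ⟨by linarith, by linarith⟩] at this
  exact hθ0ne this

theorem stmt_2 (a : ℝ) (ha : 0 < a) :
    ((fun p : ℝ × ℝ =>
        ((1 / a) * p.2 * (p.1 - 1 / 2),
          -(1 / a) * (p.1 - 1 / 2) * (p.1 + 1))) ((1 : ℝ) / 2, 0) = (0, 0) ∧
      ((1 : ℝ) / 2 + 1) ^ 2 + (0 : ℝ) ^ 2 = 9 / 4) ∧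
    (∀ M₁ M₂ : ℝ → ℝ,
      (∀ t, HasDerivAt M₁ ((1 / a) * M₂ t * (M₁ t - 1 / 2)) t) →
      (∀ t, HasDerivAt M₂ (-(1 / a) * (M₁ t - 1 / 2) * (M₁ t + 1)) t) →
      (M₁ 0 + 1) ^ 2 + M₂ 0 ^ 2 = 9 / 4 →
      ∀ t : ℝ, (M₁ t + 1) ^ 2 + M₂ t ^ 2 = 9 / 4) ∧
    (∀ M₁ M₂ : ℝ → ℝ,
      (∀ t, HasDerivAt M₁ ((1 / a) * M₂ t * (M₁ t - 1 / 2)) t) →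
      (∀ t, HasDerivAt M₂ (-(1 / a) * (M₁ t - 1 / 2) * (M₁ t + 1)) t) →
      (M₁ 0 + 1) ^ 2 + M₂ 0 ^ 2 = 9 / 4 →
      (M₁ 0, M₂ 0) ≠ (1 / 2, 0) →
      ¬ ∃ T : ℝ, 0 < T ∧ ∀ t : ℝ, (M₁ (t + T), M₂ (t + T)) = (M₁ t, M₂ t)) := by
  refine ⟨⟨by norm_num, by norm_num⟩, ?_, ?_⟩
  · exact fun M₁ M₂ h1 h2 h0 => circle_invariant a M₁ M₂ h1 h2 h0
  · exact fun M₁ M₂ h1 h2 h0 hne => not_periodic a ha M₁ M₂ h1 h2 h0 hne
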